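/- arXiv:2507.11686 — 4 statements merged into one kernel-verified Lean document; each statement's English description precedes it below -/
import Mathlib

section
/- For every x ∈ (0, 1/8], there exists a unique y₄ ∈ (0,1) such that f_x(y₄) = 4. -/
/-- For `x ∈ (0,1]`, the function `f_x(y) = ∑_{i=0}^{⌊1/x⌋} max(i·x + y − 1, 0)`. -/
noncomputable def fx (x y : ℝ) : ℝ :=
  ∑ i ∈ Finset.range (⌊1 / x⌋₊ + 1), max ((i : ℝ) * x + y - 1) 0

lemma fx_strict (x : ℝ) (hx : 0 < x) {y1 y2 : ℝ} (h1 : fx x y1 = 4) (hlt : y1 < y2) :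
    fx x y1 < fx x y2 := by
  set N := ⌊1 / x⌋₊ with hNdef
  have hN : 0 < (N : ℝ) * x + y1 - 1 := by
    by_contra h
    push_neg at h
    have hz : fx x y1 = 0 := by
      unfold fx
      apply Finset.sum_eq_zero
      intro i hi
      have hiN : i ≤ N := Nat.lt_succ_iff.mp (Finset.mem_range.mp hi)
      have hle : (i : ℝ) * x ≤ (N : ℝ) * x :=
        mul_le_mul_of_nonneg_right (by exact_mod_cast hiN) hx.le
      have : (i : ℝ) * x + y1 - 1 ≤ 0 := by linarith
      simp [max_eq_right this]
    rw [hz] at h1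
    norm_num at h1
  unfold fx
  apply Finset.sum_lt_sum
  · intro i hi
    apply max_le_max _ le_rfl
    linarith
  · refine ⟨N, Finset.self_mem_range_succ N, ?_⟩
    rw [max_eq_left hN.le, max_eq_left (by linarith)]
    linarith

theorem stmt_2 (x : ℝ) (hx : x ∈ Set.Ioc (0 : ℝ) (1 / 8)) :
    ∃! y : ℝ, y ∈ Set.Ioo (0 : ℝ) 1 ∧ fx x y = 4 := by
  obtain ⟨hx0, hx8⟩ := hx
  set N := ⌊1 / x⌋₊ with hNdef
  have hcont : Continuous (fx x) := by
    unfold fx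
    exact continuous_finset_sum _ fun i _ =>
      Continuous.max (by continuity) continuous_const
  have hNle : (N : ℝ) * x ≤ 1 := by
    have h1 : (N : ℝ) ≤ 1 / x := Nat.floor_le (by positivity)
    have := mul_le_mul_of_nonneg_right h1 hx0.le
    rwa [div_mul_cancel₀ 1 hx0.ne'] at this
  have hf0 : fx x 0 = 0 := by
    unfold fx
    apply Finset.sum_eq_zero
    intro i hi
    have hiN : i ≤ N := Nat.lt_succ_iff.mp (Finset.mem_range.mp hi)
    have hle : (i : ℝ) * x ≤ (N : ℝ) * x :=
      mul_le_mul_of_nonneg_right (by exact_mod_cast hiN) hx0.le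
    have : (i : ℝ) * x + 0 - 1 ≤ 0 := by linarith
    exact max_eq_right this
  have hN8 : (8 : ℝ) ≤ (N : ℝ) := by
    have : (8 : ℕ) ≤ N := by
      apply Nat.le_floor
      rw [le_div_iff₀ hx0]
      push_cast
      linarith
    exact_mod_cast this
  have hx1 : 1 < x * ((N : ℝ) + 1) := by
    have h := Nat.lt_floor_add_one (1 / x)
    rw [div_lt_iff₀ hx0] at h
    push_cast at h
    linarith [h]
  have hf1 : 4 < fx x 1 := by
    have hsum : (∑ i ∈ Finset.range (N + 1), (i : ℝ)) * 2 = ((N : ℝ) + 1) * N := by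
      have h2 := Finset.sum_range_id_mul_two (N + 1)
      have h3 : (N + 1) * (N + 1 - 1) = (N + 1) * N := by simp
      rw [h3] at h2
      calc (∑ i ∈ Finset.range (N + 1), (i : ℝ)) * 2
          = (((∑ i ∈ Finset.range (N + 1), i : ℕ) : ℝ)) * 2 := by push_cast; ring
        _ = (((N + 1) * N : ℕ) : ℝ) := by exact_mod_cast h2
        _ = ((N : ℝ) + 1) * N := by push_cast; ring
    have hs2 : (∑ i ∈ Finset.range (N + 1), (i : ℝ)) = ((N : ℝ) + 1) * N / 2 := by
      linarith
    have hval : fx x 1 = ((N : ℝ) + 1) * N / 2 * x := by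
      unfold fx
      rw [show (∑ i ∈ Finset.range (N + 1), max ((i : ℝ) * x + 1 - 1) 0)
            = ∑ i ∈ Finset.range (N + 1), (i : ℝ) * x from
          Finset.sum_congr rfl fun i _ => by
            have : (0 : ℝ) ≤ (i : ℝ) * x := by positivity
            rw [max_eq_left (by linarith)]
            ring]
      rw [← Finset.sum_mul, hs2]
    rw [hval]
    nlinarith [mul_lt_mul_of_pos_right hx1 (show (0 : ℝ) < N by linarith)]
  obtain ⟨y, hy, hfy⟩ := intermediate_value_Ioo (by norm_num : (0:ℝ) ≤ 1)
    hcont.continuousOn (by rw [hf0]; exact ⟨by norm_num, hf1⟩ : (4:ℝ) ∈ Set.Ioo (fx x 0) (fx x 1))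
  refine ⟨y, ⟨hy, hfy⟩, ?_⟩
  rintro z ⟨hz, hfz⟩
  rcases lt_trichotomy z y with h | h | h
  · exact absurd (fx_strict x hx0 hfz h) (by rw [hfy, hfz]; exact lt_irrefl 4)
  · exact h
  · exact absurd (fx_strict x hx0 hfy h) (by rw [hfy, hfz]; exact lt_irrefl 4)
end

section
/- For every x ∈ (0, 1/2], there exists a unique y₁ ∈ (0,1) such that f_x(y₁) = 1. -/
theorem stmt_3 (x : ℝ) (hx : x ∈ Set.Ioc (0 : ℝ) (1 / 2)) :
    ∃! y : ℝ, y ∈ Set.Ioo (0 : ℝ) 1 ∧ fx x y = 1 := by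
  obtain ⟨hx0, hx2⟩ := hx
  set N := ⌊1 / x⌋₊ with hNdef
  have hcont : Continuous (fx x) := by
    unfold fx
    exact continuous_finset_sum _ fun i _ =>
      ((continuous_const.add continuous_id).sub continuous_const).max continuous_const
  have hN2 : 2 ≤ N := by
    rw [hNdef, Nat.le_floor_iff (by positivity)]
    rw [le_div_iff₀ hx0]; push_cast; linarith
  have hNx : (N : ℝ) * x ≤ 1 := by
    have h1 : (N : ℝ) ≤ 1 / x := Nat.floor_le (by positivity)
    calc (N : ℝ) * x ≤ (1 / x) * x := by nlinarith
      _ = 1 := by field_simp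
  have hf0 : fx x 0 = 0 := by
    unfold fx
    apply Finset.sum_eq_zero
    intro i hi
    rw [Finset.mem_range] at hi
    have hiN : (i : ℝ) ≤ N := by exact_mod_cast Nat.lt_add_one_iff.mp hi
    have : (i : ℝ) * x ≤ 1 := le_trans (by nlinarith) hNx
    rw [max_eq_right]; linarith
  have hf1 : 1 < fx x 1 := by
    unfold fx
    have heq : ∀ i ∈ Finset.range (N + 1), max ((i : ℝ) * x + 1 - 1) 0 = (i : ℝ) * x := by
      intro i _
      rw [show (i : ℝ) * x + 1 - 1 = (i : ℝ) * x by ring, max_eq_left (by positivity)]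
    rw [Finset.sum_congr rfl heq, ← Finset.sum_mul]
    have hgauss : (∑ i ∈ Finset.range (N + 1), (i : ℝ)) * 2 = (N + 1) * N := by
      rw [← Nat.cast_sum]
      exact_mod_cast congrArg (Nat.cast : ℕ → ℝ) (Finset.sum_range_id_mul_two (N + 1))
    have hfloor : 1 / x < (N : ℝ) + 1 := Nat.lt_floor_add_one (1 / x)
    have hx1 : 1 < x * ((N : ℝ) + 1) := by
      rw [div_lt_iff₀ hx0] at hfloor; nlinarith
    have hN2' : (2 : ℝ) ≤ N := by exact_mod_cast hN2
    nlinarith [Finset.sum_range_id_mul_two (N + 1)]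
  have hmono : ∀ y₁ y₂ : ℝ, y₁ < y₂ → 0 < fx x y₂ → fx x y₁ < fx x y₂ := by
    intro y₁ y₂ hlt hpos
    unfold fx at hpos ⊢
    rw [← hNdef] at hpos ⊢
    have hpos' : ∑ i ∈ Finset.range (N + 1), (0 : ℝ) <
        ∑ i ∈ Finset.range (N + 1), max ((i : ℝ) * x + y₂ - 1) 0 := by
      rwa [Finset.sum_const_zero]
    obtain ⟨i, hi, hipos⟩ := Finset.exists_lt_of_sum_lt hpos'
    apply Finset.sum_lt_sum
    · intro j _
      exact max_le_max (by linarith) le_rfl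
    · refine ⟨i, hi, ?_⟩
      have h2 : 0 < (i : ℝ) * x + y₂ - 1 := by
        rcases lt_max_iff.mp hipos with h | h
        · exact h
        · exact absurd h (lt_irrefl 0)
      rw [max_eq_left h2.le]
      exact max_lt (by linarith) h2
  have h1mem : (1 : ℝ) ∈ Set.Ioo (fx x 0) (fx x 1) := ⟨by rw [hf0]; norm_num, hf1⟩
  obtain ⟨y, hy, hyfx⟩ := intermediate_value_Ioo zero_le_one hcont.continuousOn h1mem
  refine ⟨y, ⟨hy, hyfx⟩, ?_⟩
  rintro z ⟨hz, hzfx⟩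
  rcases lt_trichotomy z y with h | h | h
  · exfalso
    have := hmono z y h (by rw [hyfx]; norm_num)
    rw [hyfx, hzfx] at this; exact lt_irrefl 1 this
  · exact h
  · exfalso
    have := hmono y z h (by rw [hzfx]; norm_num)
    rw [hyfx, hzfx] at this; exact lt_irrefl 1 this
end

section
/- Let G be a finite simple graph on n ≥ 1 vertices, let i ∈ ℕ, let λ > 0, and let R ⊆ V be nonempty with |R| = r. Define A = {w ∈ V : |N_i(w) ∩ R| ≥ λ·|N_i(w)|·r/n}. If A is nonempty, then |A| ≤ (n/λ) · (max_{v ∈ R} |N_i(v)|) / (min_{w ∈ A} |N_i(w)|). -/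
/-- The ball of radius `i` around `v`: all vertices at graph distance at most `i`
(distance taken in `ℕ∞`, so vertices in other components are excluded). -/
noncomputable def ballF {V : Type*} [Fintype V] (G : SimpleGraph V) (v : V) (i : ℕ) :
    Finset V :=
  @Finset.filter V (fun w => G.edist v w ≤ (i : ℕ∞)) (Classical.decPred _) Finset.univ

lemma mem_ballF_self {V : Type*} [Fintype V] (G : SimpleGraph V) (v : V) (i : ℕ) :
    v ∈ ballF G v i := by
  simp [ballF]

lemma mem_ballF_comm {V : Type*} [Fintype V] (G : SimpleGraph V) (v w : V) (i : ℕ) :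
    v ∈ ballF G w i ↔ w ∈ ballF G v i := by
  simp [ballF, SimpleGraph.edist_comm]

lemma dc {V : Type*} [Fintype V] [DecidableEq V] (G : SimpleGraph V) (i : ℕ)
    (A R : Finset V) :
    ∑ w ∈ A, ((ballF G w i) ∩ R).card = ∑ v ∈ R, ((ballF G v i) ∩ A).card := by
  have h : ∀ (s t : Finset V), ∀ w, ((ballF G w i) ∩ s).card
      = ∑ v ∈ s, if v ∈ ballF G w i then 1 else 0 := by
    intro s t w
    classical
    rw [Finset.inter_comm, ← Finset.filter_mem_eq_inter, Finset.card_filter]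
  simp_rw [h A R, h R A]
  rw [Finset.sum_comm]
  refine Finset.sum_congr rfl fun v _ => Finset.sum_congr rfl fun w _ => ?_
  simp [mem_ballF_comm]

theorem stmt_9 {V : Type*} [Fintype V] [DecidableEq V] (G : SimpleGraph V) (n : ℕ) (hn : 1 ≤ n)
    (hV : Fintype.card V = n) (i : ℕ) (lam : ℝ) (hlam : 0 < lam)
    (R : Finset V) (hRne : R.Nonempty) (r : ℕ) (hr : R.card = r)
    (A : Finset V)
    (hA : A = @Finset.filter V
      (fun w => lam * ((ballF G w i).card : ℝ) * (r : ℝ) / (n : ℝ)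
        ≤ (((ballF G w i) ∩ R).card : ℝ))
      (Classical.decPred _) Finset.univ)
    (hAne : A.Nonempty) :
    (A.card : ℝ) ≤ ((n : ℝ) / lam) *
        (R.sup' hRne fun v => ((ballF G v i).card : ℝ)) /
        (A.inf' hAne fun w => ((ballF G w i).card : ℝ)) := by
  classical
  set M : ℝ := R.sup' hRne fun v => ((ballF G v i).card : ℝ) with hM
  set m : ℝ := A.inf' hAne fun w => ((ballF G w i).card : ℝ) with hm
  have hm1 : 1 ≤ m := by
    rw [hm, Finset.le_inf'_iff]
    intro w _
    have := Finset.card_pos.mpr ⟨w, mem_ballF_self G w i⟩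
    exact_mod_cast this
  have hmpos : 0 < m := lt_of_lt_of_le one_pos hm1
  have hnpos : (0:ℝ) < n := by exact_mod_cast hn
  have hrpos : (0:ℝ) < r := by
    have := Finset.card_pos.mpr hRne
    rw [hr] at this
    exact_mod_cast this
  -- lower bound on sum
  have h1 : lam * m * r / n * A.card ≤ ∑ w ∈ A, (((ballF G w i) ∩ R).card : ℝ) := by
    calc lam * m * r / n * A.card = ∑ w ∈ A, lam * m * r / n := by
          rw [Finset.sum_const, nsmul_eq_mul, mul_comm]
      _ ≤ ∑ w ∈ A, lam * ((ballF G w i).card : ℝ) * r / n := by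
          refine Finset.sum_le_sum fun w hw => ?_
          have hmw : m ≤ ((ballF G w i).card : ℝ) := Finset.inf'_le _ hw
          have := mul_le_mul_of_nonneg_left hmw (le_of_lt hlam)
          have h2 := mul_le_mul_of_nonneg_right this (le_of_lt hrpos)
          exact div_le_div_of_nonneg_right h2 hnpos.le
      _ ≤ ∑ w ∈ A, (((ballF G w i) ∩ R).card : ℝ) := by
          refine Finset.sum_le_sum fun w hw => ?_
          rw [hA] at hw
          exact (Finset.mem_filter.mp hw).2
  -- upper bound
  have h2 : ∑ w ∈ A, (((ballF G w i) ∩ R).card : ℝ) ≤ r * M := by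
    have hdc := dc G i A R
    have : ∑ w ∈ A, (((ballF G w i) ∩ R).card : ℝ)
        = ∑ v ∈ R, (((ballF G v i) ∩ A).card : ℝ) := by
      exact_mod_cast congrArg (Nat.cast : ℕ → ℝ) hdc
    rw [this]
    calc ∑ v ∈ R, (((ballF G v i) ∩ A).card : ℝ)
        ≤ ∑ v ∈ R, M := by
          refine Finset.sum_le_sum fun v hv => ?_
          refine le_trans ?_ (Finset.le_sup' (fun v => ((ballF G v i).card : ℝ)) hv)
          exact_mod_cast Finset.card_le_card (Finset.inter_subset_left)
      _ = r * M := by rw [Finset.sum_const, nsmul_eq_mul, hr]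
  have key : lam * m * r / n * A.card ≤ r * M := le_trans h1 h2
  -- rearrange
  rw [div_mul_eq_mul_div, div_le_iff₀ hnpos] at key
  have key2 : lam * m * A.card ≤ M * n := by nlinarith [key, hrpos]
  rw [div_mul_eq_mul_div, div_div, le_div_iff₀ (by positivity)]
  nlinarith [key2, hnpos, hlam, hmpos]
end

section
/- Let x ∈ (1/2, 1) be fixed and let p : ℕ → [0,1] satisfy d = n^{x+O(1/log n)} where d(n) = (n−1)·p(n). Then the probability that the binomial random graph G(n, p(n)) has no multiset resolving set at all (i.e., that its multiset metric dimension is ∞) tends to 1 as n → ∞. -/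
open MeasureTheory Filter
open scoped ENNReal

/-- The binomial random graph measure `G(n,p)`: each of the possible edges (unordered
pairs of vertices of `Fin n`) appears independently with probability `p`.  The sample
space records for each unordered pair whether it is an edge.  (When `p ∈ [0,1]`,
`min (ENNReal.ofReal p) 1 = ENNReal.ofReal p`.) -/
noncomputable def gnp (n : ℕ) (p : ℝ) : Measure (Sym2 (Fin n) → Bool) :=
  Measure.pi fun _ =>
    (PMF.bernoulli (min (Real.toNNReal p) 1) (min_le_right _ _)).toMeasure

/-- The simple graph on `Fin n` determined by an outcome `ω` of the edge indicators. -/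
def graphOf {n : ℕ} (ω : Sym2 (Fin n) → Bool) : SimpleGraph (Fin n) :=
  SimpleGraph.fromRel fun v w => ω s(v, w) = true

/-- The multiset of distances from `v` to the vertices of `R` (with multiplicity),
distances taken in `ℕ∞`. -/
noncomputable def msig {V : Type*} (G : SimpleGraph V) (R : Finset V) (v : V) :
    Multiset ℕ∞ :=
  R.val.map fun r => G.edist v r

/-- `R` is multiset resolving for `G`. -/
def MsResolving {V : Type*} (G : SimpleGraph V) (R : Finset V) : Prop :=
  ∀ v w : V, v ≠ w → msig G R v ≠ msig G R w

lemma mall {β : Type*} [MeasurableSpace β] [MeasurableSingletonClass β] [Finite β]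
    (s : Set β) : MeasurableSet s := (Set.toFinite s).measurableSet

lemma pi_pairs (ν : Measure Bool) [IsProbabilityMeasure ν] :
    ∀ (k : ℕ) (ι : Type) [Fintype ι] [DecidableEq ι] (c : Fin k → ι × ι),
      (Function.Injective fun z : Fin k × Bool =>
        if z.2 then (c z.1).2 else (c z.1).1) →
      Measure.pi (fun _ : ι => ν)
          {ω : ι → Bool | ∀ u, ¬(ω (c u).1 = true ∧ ω (c u).2 = true)}
        = (1 - ν {true} * ν {true}) ^ k := by
  intro k
  induction k with
  | zero =>
    intro ι _ _ c _
    have : {ω : ι → Bool | ∀ u : Fin 0, ¬(ω (c u).1 = true ∧ ω (c u).2 = true)} = Set.univ := by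
      ext ω; simp
    rw [this, pow_zero]
    exact measure_univ
  | succ k IH =>
    intro ι _ _ c hinj
    classical
    set i₁ := (c 0).1 with hi₁
    set i₂ := (c 0).2 with hi₂
    have h12 : i₁ ≠ i₂ := by
      intro h
      have := hinj (a₁ := (0, false)) (a₂ := (0, true)) (by simpa using h)
      simp at this
    set P : ι → Prop := fun i => i = i₁ ∨ i = i₂ with hP
    have hne1 : ∀ u : Fin k, ¬ P (c u.succ).1 := by
      intro u h
      rcases h with h | h
      · have := hinj (a₁ := (u.succ, false)) (a₂ := (0, false)) (by simpa using h)
        simp [Fin.succ_ne_zero] at this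
      · have := hinj (a₁ := (u.succ, false)) (a₂ := (0, true)) (by simpa using h)
        simp [Fin.succ_ne_zero] at this
    have hne2 : ∀ u : Fin k, ¬ P (c u.succ).2 := by
      intro u h
      rcases h with h | h
      · have := hinj (a₁ := (u.succ, true)) (a₂ := (0, false)) (by simpa using h)
        simp [Fin.succ_ne_zero] at this
      · have := hinj (a₁ := (u.succ, true)) (a₂ := (0, true)) (by simpa using h)
        simp [Fin.succ_ne_zero] at this
    set e := MeasurableEquiv.piEquivPiSubtypeProd (fun _ : ι => Bool) P with he
    have hMP := measurePreserving_piEquivPiSubtypeProd (fun _ : ι => ν) P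
    set A₁ : Set ({i // P i} → Bool) :=
      {g | ¬(g ⟨i₁, Or.inl rfl⟩ = true ∧ g ⟨i₂, Or.inr rfl⟩ = true)} with hA₁
    set c' : Fin k → {i // ¬ P i} × {i // ¬ P i} :=
      fun u => (⟨(c u.succ).1, hne1 u⟩, ⟨(c u.succ).2, hne2 u⟩) with hc'
    set A₂ : Set ({i // ¬ P i} → Bool) :=
      {h | ∀ u, ¬(h (c' u).1 = true ∧ h (c' u).2 = true)} with hA₂
    have hset : {ω : ι → Bool | ∀ u, ¬(ω (c u).1 = true ∧ ω (c u).2 = true)}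
        = e ⁻¹' (A₁ ×ˢ A₂) := by
      ext ω
      simp only [Set.mem_setOf_eq, Set.mem_preimage, Set.mem_prod, he,
        MeasurableEquiv.piEquivPiSubtypeProd, MeasurableEquiv.coe_mk,
        Equiv.piEquivPiSubtypeProd_apply, hA₁, hA₂, hc', Set.mem_setOf_eq]
      rw [Fin.forall_fin_succ]
    rw [hset, hMP.measure_preimage_equiv, Measure.prod_prod]
    have hcard : Fintype.card {i // P i} = 2 := by
      rw [Fintype.card_subtype]
      have : Finset.univ.filter P = {i₁, i₂} := by
        ext i; simp [hP]
      rw [this, Finset.card_insert_of_notMem (by simpa using h12), Finset.card_singleton]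
    have hA1meas : Measure.pi (fun _ : {i // P i} => ν) A₁ = 1 - ν {true} * ν {true} := by
      have hcompl : A₁ᶜ = Set.univ.pi (fun _ : {i // P i} => ({true} : Set Bool)) := by
        ext g
        simp only [hA₁, Set.mem_compl_iff, Set.mem_setOf_eq, not_not, Set.mem_pi,
          Set.mem_univ, Set.mem_singleton_iff, forall_true_left]
        constructor
        · rintro ⟨h1, h2⟩ j
          rcases j.2 with h | h
          · rwa [show j = ⟨i₁, Or.inl rfl⟩ from Subtype.ext h]
          · rwa [show j = ⟨i₂, Or.inr rfl⟩ from Subtype.ext h]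
        · intro h; exact ⟨h _, h _⟩
      have h1 : Measure.pi (fun _ : {i // P i} => ν) A₁ᶜ = ν {true} * ν {true} := by
        rw [hcompl, Measure.pi_pi, Finset.prod_const]
        rw [← Fintype.card, hcard, sq]
      have := prob_compl_eq_one_sub (μ := Measure.pi (fun _ : {i // P i} => ν))
        (mall A₁ᶜ)
      rw [compl_compl] at this
      rw [this, h1]
    have hA2meas : Measure.pi (fun _ : {i // ¬ P i} => ν) A₂
        = (1 - ν {true} * ν {true}) ^ k := by
      apply IH
      intro z z' h
      have hval : ∀ w : Fin k × Bool,
          ((if w.2 then (c' w.1).2 else (c' w.1).1 : {i // ¬ P i}) : ι)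
            = if w.2 then (c w.1.succ).2 else (c w.1.succ).1 := by
        intro w; by_cases hw : w.2 <;> simp [hw, hc']
      have h' : (if z.2 then (c z.1.succ).2 else (c z.1.succ).1)
          = (if z'.2 then (c z'.1.succ).2 else (c z'.1.succ).1) := by
        rw [← hval z, ← hval z']
        exact congrArg Subtype.val h
      have h2 := hinj (a₁ := (z.1.succ, z.2)) (a₂ := (z'.1.succ, z'.2)) h'
      have ha := congrArg Prod.fst h2
      have hb := congrArg Prod.snd h2
      simp only at ha hb
      exact Prod.ext (Fin.succ_injective _ ha) hb
    rw [hA1meas, hA2meas, pow_succ, mul_comm]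

section Det
variable {n : ℕ} (G : SimpleGraph (Fin n))

lemma edist_val [DecidableRel G.Adj] (h2 : ∀ v w : Fin n, v ≠ w → G.edist v w ≤ 2) (v r : Fin n) :
    G.edist v r = if r = v then 0 else if G.Adj v r then 1 else 2 := by
  by_cases h : r = v
  · simp [h]
  · rw [if_neg h]
    by_cases ha : G.Adj v r
    · rw [if_pos ha, SimpleGraph.edist_eq_one_iff_adj.mpr ha]
    · rw [if_neg ha]
      have hle : G.edist v r ≤ 2 := h2 v r (Ne.symm h)
      have h0 : G.edist v r ≠ 0 := fun heq =>
        h (SimpleGraph.edist_eq_zero_iff.mp heq).symm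
      have h1 : G.edist v r ≠ 1 := fun hh => ha (SimpleGraph.edist_eq_one_iff_adj.mp hh)
      obtain ⟨m, hm⟩ : ∃ m : ℕ, G.edist v r = m := by
        refine ⟨(G.edist v r).toNat, (ENat.coe_toNat ?_).symm⟩
        intro htop; rw [htop] at hle; exact (by simp : ¬ ((⊤:ℕ∞) ≤ 2)) hle
      rw [hm] at hle h0 h1 ⊢
      have hle' : m ≤ 2 := by exact_mod_cast hle
      have h0' : m ≠ 0 := by exact_mod_cast h0
      have h1' : m ≠ 1 := by exact_mod_cast h1
      have : m = 2 := by omega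
      rw [this]; rfl

lemma msig_count [DecidableRel G.Adj] (h2 : ∀ v w : Fin n, v ≠ w → G.edist v w ≤ 2)
    (R : Finset (Fin n)) (v w : Fin n) (hvw : v ∈ R ↔ w ∈ R)
    (hdeg : (R.filter (G.Adj v)).card = (R.filter (G.Adj w)).card) :
    msig G R v = msig G R w := by
  classical
  have key : ∀ u : Fin n, ∀ c : ℕ∞,
      Multiset.count c (msig G R u) = (R.filter (fun r => c = G.edist u r)).card := by
    intro u c
    rw [msig, Multiset.count_map]
    rfl
  have hcnt : ∀ u : Fin n, ∀ c : ℕ∞,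
      (R.filter (fun r => c = G.edist u r)).card =
        (if c = 0 then (if u ∈ R then 1 else 0)
         else if c = 1 then (R.filter (G.Adj u)).card
         else if c = 2 then R.card - ((if u ∈ R then 1 else 0) + (R.filter (G.Adj u)).card)
         else 0) := by
    intro u c
    by_cases hc0 : c = 0
    · rw [if_pos hc0]
      have : R.filter (fun r => c = G.edist u r) = R.filter (fun r => r = u) := by
        apply Finset.filter_congr
        intro r _
        rw [hc0, edist_val G h2, eq_comm]
        by_cases h : r = u
        · simp [h]
        · by_cases ha : G.Adj u r <;> simp [h, ha]
      rw [this, Finset.filter_eq']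
      by_cases h : u ∈ R <;> simp [h]
    · rw [if_neg hc0]
      by_cases hc1 : c = 1
      · rw [if_pos hc1]
        have : R.filter (fun r => c = G.edist u r) = R.filter (G.Adj u) := by
          apply Finset.filter_congr
          intro r _
          rw [hc1, edist_val G h2, eq_comm]
          by_cases h : r = u
          · simp [h, G.irrefl]
          · by_cases ha : G.Adj u r <;> simp [h, ha]
        rw [this]
      · rw [if_neg hc1]
        by_cases hc2 : c = 2
        · rw [if_pos hc2]
          have hsplit : R.filter (fun r => c = G.edist u r)
              = R.filter (fun r => ¬ (r = u ∨ G.Adj u r)) := by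
            apply Finset.filter_congr
            intro r _
            rw [hc2, edist_val G h2, eq_comm]
            by_cases h : r = u
            · simp [h]
            · by_cases ha : G.Adj u r <;> simp [h, ha]
          have hadd := Finset.card_filter_add_card_filter_not
            (s := R) (p := fun r => r = u ∨ G.Adj u r)
          have hor : (R.filter (fun r => r = u ∨ G.Adj u r)).card
              = (if u ∈ R then 1 else 0) + (R.filter (G.Adj u)).card := by
            rw [Finset.filter_or, Finset.card_union_of_disjoint, Finset.filter_eq']
            · by_cases h : u ∈ R <;> simp [h]
            · rw [Finset.disjoint_filter]
              intro r _ hr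
              rw [hr]
              exact G.irrefl
          rw [hsplit]
          omega
        · rw [if_neg hc2]
          rw [Finset.card_eq_zero, Finset.filter_eq_empty_iff]
          intro r _
          rw [edist_val G h2]
          by_cases h : r = u
          · simp [h]; exact fun hh => hc0 hh
          · by_cases ha : G.Adj u r <;> simp [h, ha] <;> intro hh
            · exact hc1 hh
            · exact hc2 hh
  apply Multiset.ext.mpr
  intro c
  rw [key, key, hcnt, hcnt, hdeg]
  by_cases h : v ∈ R
  · simp [h, hvw.mp h]
  · have hw : w ∉ R := fun hww => h (hvw.mpr hww)
    simp [h, hw]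

lemma no_resolving [DecidableRel G.Adj] (hn : 4 ≤ n) (h2 : ∀ v w : Fin n, v ≠ w → G.edist v w ≤ 2) :
    ∀ R : Finset (Fin n), ¬ MsResolving G R := by
  classical
  intro R hres
  by_cases hR : R.card ≤ 1
  · interval_cases h : R.card
    · -- R = ∅
      have hRe : R = ∅ := Finset.card_eq_zero.mp h
      have h01 : (⟨0, by omega⟩ : Fin n) ≠ ⟨1, by omega⟩ := by
        intro hh; exact absurd (congrArg Fin.val hh) (by simp)
      exact hres _ _ h01 (by simp [msig, hRe])
    · -- R = {r}
      obtain ⟨r, hr⟩ := Finset.card_eq_one.mp h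
      have hmaps : ∀ v ∈ Finset.univ.erase r, G.edist v r ∈ ({1, 2} : Finset ℕ∞) := by
        intro v hv
        have hvr : v ≠ r := Finset.ne_of_mem_erase hv
        rw [edist_val G h2]
        rw [if_neg (Ne.symm hvr)]
        by_cases ha : G.Adj v r <;> simp [ha]
      have hcard : ({1, 2} : Finset ℕ∞).card < (Finset.univ.erase r).card := by
        rw [Finset.card_erase_of_mem (Finset.mem_univ r), Finset.card_univ, Fintype.card_fin]
        have : ({1, 2} : Finset ℕ∞).card ≤ 2 := Finset.card_insert_le _ _ |>.trans (by simp)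
        omega
      obtain ⟨v, hv, w, hw, hne, heq⟩ :=
        Finset.exists_ne_map_eq_of_card_lt_of_maps_to hcard hmaps
      exact hres v w hne (by simp [msig, hr, heq])
  · push_neg at hR
    set a : Fin n → ℕ := fun v => (R.filter (G.Adj v)).card with ha
    have hlt : ∀ v ∈ R, a v < R.card := by
      intro v hv
      have hsub : R.filter (G.Adj v) ⊆ R.erase v := by
        intro u hu
        rw [Finset.mem_filter] at hu
        exact Finset.mem_erase.mpr ⟨(G.ne_of_adj hu.2).symm, hu.1⟩
      calc a v ≤ (R.erase v).card := Finset.card_le_card hsub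
        _ < R.card := by rw [Finset.card_erase_of_mem hv]; omega
    have hinj : ∀ v₁ v₂ (h₁ : v₁ ∈ R) (h₂ : v₂ ∈ R),
        (fun v (_ : v ∈ R) => a v) v₁ h₁ = (fun v (_ : v ∈ R) => a v) v₂ h₂ → v₁ = v₂ := by
      intro v₁ v₂ h₁ h₂ heq
      by_contra hne
      exact hres v₁ v₂ hne (msig_count G h2 R v₁ v₂ (by simp [h₁, h₂]) heq)
    have hsurj := Finset.surj_on_of_inj_on_of_card_le (s := R) (t := Finset.range R.card)
      (fun v _ => a v) (fun v hv => Finset.mem_range.mpr (hlt v hv)) hinj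
      (by rw [Finset.card_range])
    obtain ⟨u, hu, hu0⟩ := hsurj 0 (Finset.mem_range.mpr (by omega))
    obtain ⟨w, hw, hwmax⟩ := hsurj (R.card - 1) (Finset.mem_range.mpr (by omega))
    have huw : u ≠ w := by
      intro h
      rw [h] at hu0
      omega
    have hwfull : R.filter (G.Adj w) = R.erase w := by
      apply Finset.eq_of_subset_of_card_le
      · intro u' hu'
        rw [Finset.mem_filter] at hu'
        exact Finset.mem_erase.mpr ⟨(G.ne_of_adj hu'.2).symm, hu'.1⟩
      · have hrfl : (R.filter (G.Adj w)).card = a w := rfl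
        rw [Finset.card_erase_of_mem hw]
        omega
    have hadj : G.Adj w u := by
      have : u ∈ R.filter (G.Adj w) := by
        rw [hwfull]; exact Finset.mem_erase.mpr ⟨huw, hu⟩
      exact (Finset.mem_filter.mp this).2
    have hmem : w ∈ R.filter (G.Adj u) := Finset.mem_filter.mpr ⟨hw, hadj.symm⟩
    have hpos : 0 < (R.filter (G.Adj u)).card := Finset.card_pos.mpr ⟨w, hmem⟩
    have hrfl : (R.filter (G.Adj u)).card = a u := rfl
    omega

end Det

def BadPair {n : ℕ} (v w : Fin n) : Set (Sym2 (Fin n) → Bool) :=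
  {ω | ∀ u : Fin n, u ≠ v → u ≠ w → ¬(ω s(v, u) = true ∧ ω s(u, w) = true)}

lemma graphOf_adj {n : ℕ} (ω : Sym2 (Fin n) → Bool) (a b : Fin n) :
    (graphOf ω).Adj a b ↔ a ≠ b ∧ ω s(a, b) = true := by
  rw [graphOf, SimpleGraph.fromRel_adj]
  have h : s(b, a) = s(a, b) := Sym2.eq_swap
  rw [h]
  tauto

lemma bernoulli_true (p : ℝ) :
    ((PMF.bernoulli (min (Real.toNNReal p) 1) (min_le_right _ _)).toMeasure) {true}
      = ((min (Real.toNNReal p) 1 : NNReal) : ℝ≥0∞) := by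
  rw [PMF.toMeasure_apply_singleton _ _ (measurableSet_singleton _), PMF.bernoulli_apply]
  rfl

lemma badPair_measure {n : ℕ} (p : ℝ) {v w : Fin n} (hvw : v ≠ w) :
    gnp n p (BadPair v w)
      = (1 - ((min (Real.toNNReal p) 1 : NNReal) : ℝ≥0∞) *
          ((min (Real.toNNReal p) 1 : NNReal) : ℝ≥0∞)) ^ (n - 2) := by
  classical
  set ν := (PMF.bernoulli (min (Real.toNNReal p) 1) (min_le_right _ _)).toMeasure with hν
  set S : Finset (Fin n) := Finset.univ \ {v, w} with hS
  have hScard : S.card = n - 2 := by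
    rw [hS, Finset.card_sdiff_of_subset (Finset.subset_univ _), Finset.card_univ, Fintype.card_fin]
    rw [Finset.card_insert_of_notMem (by simpa using hvw), Finset.card_singleton]
  set e : Fin S.card ≃ {x // x ∈ S} := S.equivFin.symm with he
  have hSne : ∀ j : Fin S.card, ((e j : Fin n) ≠ v) ∧ ((e j : Fin n) ≠ w) := by
    intro j
    have h1 : (e j : Fin n) ∈ Finset.univ \ {v, w} := (e j).2
    rw [Finset.mem_sdiff] at h1
    simpa using h1.2
  set c : Fin S.card → Sym2 (Fin n) × Sym2 (Fin n) :=
    fun j => (s(v, (e j : Fin n)), s((e j : Fin n), w)) with hc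
  have hset : BadPair v w =
      {ω : Sym2 (Fin n) → Bool | ∀ j, ¬(ω (c j).1 = true ∧ ω (c j).2 = true)} := by
    ext ω
    constructor
    · intro hω j
      exact hω (e j) (hSne j).1 (hSne j).2
    · intro hω u hu1 hu2
      have huS : u ∈ S := by
        rw [hS, Finset.mem_sdiff]
        exact ⟨Finset.mem_univ _, by simp [hu1, hu2]⟩
      have := hω (e.symm ⟨u, huS⟩)
      simpa [hc] using this
  have hinj : Function.Injective fun z : Fin S.card × Bool =>
      if z.2 then (c z.1).2 else (c z.1).1 := by
    rintro ⟨z1, z2⟩ ⟨z1', z2'⟩ h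
    have hvw' : v ≠ w := hvw
    have hcoe : ∀ j j' : Fin S.card, (e j : Fin n) = (e j' : Fin n) → j = j' := by
      intro j j' hj
      exact e.injective (Subtype.ext hj)
    cases z2 <;> cases z2' <;> simp only [hc, if_true, if_false, Bool.false_eq_true] at h ⊢
    · rw [Sym2.eq_iff] at h
      rcases h with ⟨-, h2⟩ | ⟨h1, h2⟩
      · rw [hcoe _ _ h2]
      · exact absurd h1.symm (hSne z1').1
    · rw [Sym2.eq_iff] at h
      rcases h with ⟨h1, -⟩ | ⟨h1, -⟩
      · exact absurd h1.symm (hSne z1').1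
      · exact absurd h1 hvw'
    · rw [Sym2.eq_iff] at h
      rcases h with ⟨h1, -⟩ | ⟨-, h2⟩
      · exact absurd h1 (hSne z1).1
      · exact absurd h2.symm hvw'
    · rw [Sym2.eq_iff] at h
      rcases h with ⟨h1, -⟩ | ⟨-, h2⟩
      · rw [hcoe _ _ h1]
      · exact absurd h2.symm (hSne z1').2
  have := pi_pairs ν S.card (Sym2 (Fin n)) c hinj
  rw [gnp, hset, ← hν]
  rw [this, bernoulli_true, hScard]

lemma tail_tendsto (x : ℝ) (hx : x ∈ Set.Ioo (1 / 2 : ℝ) 1)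
    (p : ℕ → ℝ) (hp : ∀ n, p n ∈ Set.Icc (0 : ℝ) 1)
    (C₀ : ℝ) (hC₀ : 0 < C₀)
    (hev : ∀ᶠ n : ℕ in atTop, (n : ℝ) ^ (x - C₀ / Real.log n) ≤ ((n : ℝ) - 1) * p n) :
    Tendsto (fun n : ℕ => (n : ℝ) ^ 2 * Real.exp (-(p n * p n)) ^ (n - 2))
      atTop (nhds 0) := by
  obtain ⟨hx1, hx2⟩ := hx
  set δ : ℝ := 2 * x - 1 with hδdef
  have hδ : 0 < δ := by simp only [hδdef]; linarith
  set cc : ℝ := Real.exp (-(2 * C₀)) / 2 with hccdef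
  have hcc : 0 < cc := by positivity
  -- the dominating sequence tends to 0
  have hg : Tendsto (fun n : ℕ => (n : ℝ) ^ 2 * Real.exp (-(cc * (n : ℝ) ^ δ)))
      atTop (nhds 0) := by
    have h1 : Tendsto (fun y : ℝ => y ^ (2 / δ) * Real.exp (-cc * y)) atTop (nhds 0) :=
      tendsto_rpow_mul_exp_neg_mul_atTop_nhds_zero _ _ hcc
    have h2 : Tendsto (fun n : ℕ => (n : ℝ) ^ δ) atTop atTop :=
      (tendsto_rpow_atTop hδ).comp tendsto_natCast_atTop_atTop
    have h3 := h1.comp h2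
    apply h3.congr
    intro n
    simp only [Function.comp_apply]
    congr 1
    · rw [← Real.rpow_natCast ((n : ℝ)) 2, ← Real.rpow_mul (Nat.cast_nonneg n)]
      congr 1
      field_simp
      norm_num
    · ring_nf
  -- squeeze
  apply tendsto_of_tendsto_of_tendsto_of_le_of_le' tendsto_const_nhds hg
  · filter_upwards with n
    positivity
  · filter_upwards [hev, eventually_ge_atTop 4] with n hn hn4
    have hn4' : (4 : ℝ) ≤ (n : ℝ) := by exact_mod_cast hn4
    have hn0 : (0 : ℝ) < n := by linarith
    have hne0 : (n : ℝ) ≠ 0 := ne_of_gt hn0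
    have hlogpos : 0 < Real.log n := Real.log_pos (by linarith)
    have hp0 : 0 ≤ p n := (hp n).1
    -- rewrite the lower bound
    have hL : (n : ℝ) ^ (x - C₀ / Real.log n) = Real.exp (-C₀) * (n : ℝ) ^ x := by
      rw [Real.rpow_def_of_pos hn0, Real.rpow_def_of_pos hn0, ← Real.exp_add]
      congr 1
      field_simp
      ring
    rw [hL] at hn
    have h1 : Real.exp (-C₀) * (n : ℝ) ^ x ≤ (n : ℝ) * p n := by
      nlinarith [hp0]
    have hx1' : (n : ℝ) ^ x = (n : ℝ) ^ (x - 1) * n := by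
      rw [← Real.rpow_add_one hne0]
      ring_nf
    have hplb : Real.exp (-C₀) * (n : ℝ) ^ (x - 1) ≤ p n := by
      have := h1
      rw [hx1'] at this
      have h2 : (Real.exp (-C₀) * (n : ℝ) ^ (x - 1)) * n ≤ p n * n := by linarith
      exact le_of_mul_le_mul_right (by linarith) hn0
    have hrpos : (0 : ℝ) < (n : ℝ) ^ (x - 1) := Real.rpow_pos_of_pos hn0 _
    have hsq : Real.exp (-(2 * C₀)) * (n : ℝ) ^ (2 * x - 2) ≤ p n * p n := by
      have h3 : (Real.exp (-C₀) * (n : ℝ) ^ (x - 1)) * (Real.exp (-C₀) * (n : ℝ) ^ (x - 1))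
          ≤ p n * p n := by
        apply mul_le_mul hplb hplb (by positivity) hp0
      calc Real.exp (-(2 * C₀)) * (n : ℝ) ^ (2 * x - 2)
          = (Real.exp (-C₀) * (n : ℝ) ^ (x - 1)) * (Real.exp (-C₀) * (n : ℝ) ^ (x - 1)) := by
            rw [show (-(2 * C₀)) = (-C₀) + (-C₀) by ring, Real.exp_add,
              show (2 * x - 2) = (x - 1) + (x - 1) by ring, Real.rpow_add hn0]
            ring
        _ ≤ p n * p n := h3
    -- key: cc * n ^ δ ≤ (n - 2) * (p n * p n)
    have hkey : cc * (n : ℝ) ^ δ ≤ ((n - 2 : ℕ) : ℝ) * (p n * p n) := by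
      have hcast : ((n - 2 : ℕ) : ℝ) = (n : ℝ) - 2 := by
        rw [Nat.cast_sub (by omega)]
        norm_num
      have hhalf : (n : ℝ) / 2 ≤ ((n - 2 : ℕ) : ℝ) := by
        rw [hcast]; linarith
      have hδsplit : (n : ℝ) ^ δ = (n : ℝ) ^ (2 * x - 2) * n := by
        rw [← Real.rpow_add_one hne0]
        congr 1
        simp only [hδdef]
        ring
      rw [hδsplit, hccdef]
      have h22pos : (0 : ℝ) < (n : ℝ) ^ (2 * x - 2) := Real.rpow_pos_of_pos hn0 _
      calc Real.exp (-(2 * C₀)) / 2 * ((n : ℝ) ^ (2 * x - 2) * n)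
          = (Real.exp (-(2 * C₀)) * (n : ℝ) ^ (2 * x - 2)) * ((n : ℝ) / 2) := by ring
        _ ≤ (p n * p n) * ((n - 2 : ℕ) : ℝ) := by
            apply mul_le_mul hsq hhalf (by positivity)
            nlinarith [hp0]
        _ = ((n - 2 : ℕ) : ℝ) * (p n * p n) := by ring
    -- conclude
    have hexp : Real.exp (-(p n * p n)) ^ (n - 2) = Real.exp (-(((n - 2 : ℕ) : ℝ) * (p n * p n))) := by
      rw [← Real.exp_nat_mul]
      congr 1
      ring
    rw [hexp]
    apply mul_le_mul_of_nonneg_left _ (by positivity)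
    exact Real.exp_le_exp.mpr (by linarith)


lemma not_diam2_subset {n : ℕ} :
    {ω : Sym2 (Fin n) → Bool | ¬ ∀ v w : Fin n, v ≠ w → (graphOf ω).edist v w ≤ 2}
      ⊆ ⋃ z ∈ (Finset.univ.offDiag : Finset (Fin n × Fin n)), BadPair z.1 z.2 := by
  intro ω hω
  push_neg at hω
  obtain ⟨v, w, hvw, hgt⟩ := hω
  apply Set.mem_iUnion₂.mpr
  refine ⟨(v, w), Finset.mem_offDiag.mpr ⟨Finset.mem_univ _, Finset.mem_univ _, hvw⟩, ?_⟩
  intro u hu1 hu2 hcon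
  obtain ⟨h1, h2⟩ := hcon
  have adj1 : (graphOf ω).Adj v u := (graphOf_adj ω v u).mpr ⟨fun h => hu1 h.symm, h1⟩
  have adj2 : (graphOf ω).Adj u w := (graphOf_adj ω u w).mpr ⟨hu2, h2⟩
  have hle : (graphOf ω).edist v w ≤ 2 := by
    calc (graphOf ω).edist v w ≤ (graphOf ω).edist v u + (graphOf ω).edist u w :=
          SimpleGraph.edist_triangle
      _ = 2 := by
          rw [SimpleGraph.edist_eq_one_iff_adj.mpr adj1,
            SimpleGraph.edist_eq_one_iff_adj.mpr adj2]
          rfl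
  exact (not_le.mpr hgt) hle

instance gnp_prob (n : ℕ) (p : ℝ) : IsProbabilityMeasure (gnp n p) := by
  unfold gnp
  infer_instance


theorem stmt_12 (x : ℝ) (hx : x ∈ Set.Ioo (1 / 2 : ℝ) 1)
    (p : ℕ → ℝ) (hp : ∀ n, p n ∈ Set.Icc (0 : ℝ) 1)
    (hd : ∃ C₀ > (0 : ℝ), ∀ᶠ n : ℕ in Filter.atTop,
      (n : ℝ) ^ (x - C₀ / Real.log n) ≤ ((n : ℝ) - 1) * p n ∧
      ((n : ℝ) - 1) * p n ≤ (n : ℝ) ^ (x + C₀ / Real.log n)) :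
    Tendsto (fun n : ℕ =>
        gnp n (p n) {ω | ∀ R : Finset (Fin n), ¬ MsResolving (graphOf ω) R})
      atTop (nhds 1) := by
  classical
  obtain ⟨C₀, hC₀, hev⟩ := hd
  set r : ℕ → ℝ := fun n => (n : ℝ) ^ 2 * Real.exp (-(p n * p n)) ^ (n - 2) with hrdef
  have hrt : Tendsto r atTop (nhds 0) :=
    tail_tendsto x hx p hp C₀ hC₀ (hev.mono fun n h => h.1)
  have hofr : Tendsto (fun n => ENNReal.ofReal (r n)) atTop (nhds 0) := by
    have h := ENNReal.tendsto_ofReal hrt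
    simpa using h
  have hone : Tendsto (fun n => 1 - ENNReal.ofReal (r n)) atTop (nhds 1) := by
    have h := ENNReal.Tendsto.sub
      (tendsto_const_nhds : Tendsto (fun _ : ℕ => (1 : ℝ≥0∞)) atTop (nhds 1)) hofr
      (Or.inl ENNReal.one_ne_top)
    simpa using h
  apply tendsto_of_tendsto_of_tendsto_of_le_of_le' hone tendsto_const_nhds
  · filter_upwards [eventually_ge_atTop 4] with n hn4
    set μ := gnp n (p n) with hμ
    set D : Set (Sym2 (Fin n) → Bool) :=
      {ω | ∀ v w : Fin n, v ≠ w → (graphOf ω).edist v w ≤ 2} with hD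
    have hDT : D ⊆ {ω | ∀ R : Finset (Fin n), ¬ MsResolving (graphOf ω) R} :=
      fun ω hω => no_resolving (graphOf ω) hn4 hω
    have hq : ((min (Real.toNNReal (p n)) 1 : NNReal) : ℝ≥0∞) = ENNReal.ofReal (p n) := by
      rw [min_eq_left (Real.toNNReal_le_one.mpr (hp n).2)]; rfl
    have hp0 : (0 : ℝ) ≤ p n := (hp n).1
    have hp1 : p n ≤ 1 := (hp n).2
    have hpp : (0 : ℝ) ≤ 1 - p n * p n := by nlinarith
    have hcompl : μ Dᶜ ≤ ENNReal.ofReal (r n) := by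
      have hc : Dᶜ = {ω : Sym2 (Fin n) → Bool |
          ¬ ∀ v w : Fin n, v ≠ w → (graphOf ω).edist v w ≤ 2} := by
        rw [hD, Set.compl_setOf]
      calc μ Dᶜ ≤ μ (⋃ z ∈ (Finset.univ.offDiag : Finset (Fin n × Fin n)),
              BadPair z.1 z.2) := by
            rw [hc]; exact measure_mono not_diam2_subset
        _ ≤ ∑ z ∈ (Finset.univ.offDiag : Finset (Fin n × Fin n)), μ (BadPair z.1 z.2) :=
            measure_biUnion_finset_le _ _
        _ = ∑ z ∈ (Finset.univ.offDiag : Finset (Fin n × Fin n)),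
              (1 - ENNReal.ofReal (p n) * ENNReal.ofReal (p n)) ^ (n - 2) := by
            apply Finset.sum_congr rfl
            intro z hz
            rw [hμ, badPair_measure (p n) (Finset.mem_offDiag.mp hz).2.2, hq]
        _ = ((Finset.univ.offDiag : Finset (Fin n × Fin n)).card : ℝ≥0∞) *
              (1 - ENNReal.ofReal (p n) * ENNReal.ofReal (p n)) ^ (n - 2) := by
            rw [Finset.sum_const, nsmul_eq_mul]
        _ ≤ ((n ^ 2 : ℕ) : ℝ≥0∞) *
              (1 - ENNReal.ofReal (p n) * ENNReal.ofReal (p n)) ^ (n - 2) := by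
            apply mul_le_mul_left
            have hcard : (Finset.univ.offDiag : Finset (Fin n × Fin n)).card ≤ n ^ 2 := by
              rw [Finset.offDiag_card, Finset.card_univ, Fintype.card_fin, sq]
              omega
            exact_mod_cast Nat.cast_le.mpr hcard
        _ = ENNReal.ofReal ((n : ℝ) ^ 2 * (1 - p n * p n) ^ (n - 2)) := by
            rw [← ENNReal.ofReal_mul hp0, ← ENNReal.ofReal_one,
              ← ENNReal.ofReal_sub _ (by positivity), ← ENNReal.ofReal_pow hpp,
              ENNReal.ofReal_mul (by positivity)]
            congr 1
            rw [← ENNReal.ofReal_natCast (n ^ 2)]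
            congr 1
            push_cast
            ring
        _ ≤ ENNReal.ofReal (r n) := by
            apply ENNReal.ofReal_le_ofReal
            rw [hrdef]
            apply mul_le_mul_of_nonneg_left _ (by positivity)
            apply pow_le_pow_left₀ hpp
            have h := Real.add_one_le_exp (-(p n * p n))
            linarith
    have hDmeas : μ D = 1 - μ Dᶜ := by
      have h := prob_compl_eq_one_sub (μ := μ) (mall Dᶜ)
      rwa [compl_compl] at h
    calc 1 - ENNReal.ofReal (r n) ≤ 1 - μ Dᶜ := tsub_le_tsub_left hcompl 1
      _ = μ D := hDmeas.symm
      _ ≤ μ {ω | ∀ R : Finset (Fin n), ¬ MsResolving (graphOf ω) R} := measure_mono hDT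
  · exact Filter.Eventually.of_forall fun n => prob_le_one
end
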